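/- Let γ ≥ 2 be fixed and let E be a subset of Euclidean space with |E| > 1 which is a finite union of finitely overlapping cubes of side-length c ∼ 1. Then for each K ∈ ℕ there are subsets E₁, E₂, …, E_K of E with E = ∪_{k=1}^K E_k such that each E_k is covered by the union of O(|E|^{1/K}) many sparse collections 𝐒₁, 𝐒₂, …, 𝐒_{O(|E|^{1/K})}, each of which is an (O(|E|), |E|^{O(γ^{k−1})})-sparse collection of balls. -/

import Mathlib

open MeasureTheory Set
open scoped ENNReal NNReal

noncomputable section
open scoped Classical

/-- The axis-parallel cube of side-length `c` centered at `p`. -/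
def cube {d : ℕ} (p : EuclideanSpace ℝ (Fin d)) (c : ℝ) : Set (EuclideanSpace ℝ (Fin d)) :=
  {x | ∀ i : Fin d, |x i - p i| ≤ c / 2}

/-- A family of `N` balls of radius `R` with centers `z i` is `(N,R)`-sparse if the centers are
`(NR)^γ`-separated. -/
def IsSparseFamilyEuc {d : ℕ} (γ : ℝ) (N : ℕ) (R : ℝ)
    (z : Fin N → EuclideanSpace ℝ (Fin d)) : Prop :=
  ∀ i j : Fin N, i ≠ j → ((N : ℝ) * R) ^ γ ≤ dist (z i) (z j)


section Aux
variable {α : Type*} [MetricSpace α]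


variable {α : Type*} [MetricSpace α]

/-- `D`-separated finite set. -/
def SepSet (D : ℝ) (t : Finset α) : Prop :=
  ∀ x ∈ t, ∀ y ∈ t, x ≠ y → D ≤ dist x y

/-- L1: maximal separated subset. -/
theorem exists_maximal_separated (s : Finset α) (D : ℝ) (hD : 0 < D) :
    ∃ t ⊆ s, SepSet D t ∧ ∀ x ∈ s, ∃ y ∈ t, dist x y < D := by
  classical
  have hne : (s.powerset.filter fun t => SepSet D t).Nonempty := by
    refine ⟨∅, ?_⟩
    rw [Finset.mem_filter]; simp [SepSet]
  obtain ⟨t, ht, hmax⟩ := Finset.exists_maximal hne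
  rw [Finset.mem_filter, Finset.mem_powerset] at ht
  refine ⟨t, ht.1, ht.2, ?_⟩
  intro x hx
  by_cases hxt : x ∈ t
  · exact ⟨x, hxt, by simpa using hD⟩
  · by_contra hcon
    push_neg at hcon
    have hsep : SepSet D (insert x t) := by
      intro a ha b hb hab
      rcases Finset.mem_insert.1 ha with ha' | ha' <;>
        rcases Finset.mem_insert.1 hb with hb' | hb'
      · exact absurd (ha'.trans hb'.symm) hab
      · subst ha'; exact hcon b hb'
      · subst hb'; rw [dist_comm]; exact hcon a ha'
      · exact ht.2 a ha' b hb' hab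
    have hmem : insert x t ∈ s.powerset.filter fun t => SepSet D t := by
      rw [Finset.mem_filter, Finset.mem_powerset]
      exact ⟨Finset.insert_subset hx ht.1, hsep⟩
    exact hxt (hmax hmem (Finset.subset_insert x t) (Finset.mem_insert_self x t))

/-- L2: peeling `A` maximal separated subsets. -/
theorem exists_peeling (D : ℝ) (hD : 0 < D) (A : ℕ) (s : Finset α) :
    ∃ (G : Fin A → Finset α) (r : Finset α),
      (∀ t, G t ⊆ s ∧ SepSet D (G t)) ∧ r ⊆ s ∧
      (∀ x ∈ s, (∃ t, x ∈ G t) ∨ x ∈ r) ∧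
      (∀ x ∈ r, A ≤ (s.filter fun y => dist x y < D).card) := by
  classical
  induction A generalizing s with
  | zero =>
      exact ⟨Fin.elim0, s, (fun t => t.elim0), subset_rfl, fun x hx => Or.inr hx,
        fun x _ => Nat.zero_le _⟩
  | succ A ih =>
      obtain ⟨t0, ht0s, ht0sep, ht0max⟩ := exists_maximal_separated s D hD
      obtain ⟨G, r, hG, hrs, hcov, hrich⟩ := ih (s \ t0)
      refine ⟨Fin.cons t0 G, r, ?_, hrs.trans (Finset.sdiff_subset), ?_, ?_⟩
      · intro t
        refine Fin.cases ?_ ?_ t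
        · exact ⟨ht0s, ht0sep⟩
        · intro i
          exact ⟨(hG i).1.trans Finset.sdiff_subset, (hG i).2⟩
      · intro x hx
        by_cases hxt : x ∈ t0
        · exact Or.inl ⟨0, by simpa using hxt⟩
        · rcases hcov x (Finset.mem_sdiff.2 ⟨hx, hxt⟩) with ⟨t, ht⟩ | hxr
          · exact Or.inl ⟨t.succ, by simpa using ht⟩
          · exact Or.inr hxr
      · intro x hxr
        have hxs' : x ∈ s \ t0 := hrs hxr
        have hxs : x ∈ s := Finset.sdiff_subset hxs'
        obtain ⟨y, hyt0, hyd⟩ := ht0max x hxs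
        have h1 : A ≤ ((s \ t0).filter fun y => dist x y < D).card := hrich x hxr
        have hsub : insert y ((s \ t0).filter fun y => dist x y < D) ⊆
            s.filter fun y => dist x y < D := by
          intro z hz
          rcases Finset.mem_insert.1 hz with rfl | hz
          · exact Finset.mem_filter.2 ⟨ht0s hyt0, hyd⟩
          · rw [Finset.mem_filter] at hz ⊢
            exact ⟨Finset.sdiff_subset hz.1, hz.2⟩
        have hy_not : y ∉ (s \ t0).filter fun y => dist x y < D := by
          intro hmem
          exact (Finset.mem_sdiff.1 (Finset.mem_filter.1 hmem).1).2 hyt0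
        have hstep : ((s \ t0).filter fun y => dist x y < D).card + 1 ≤
            (s.filter fun y => dist x y < D).card := by
          rw [← Finset.card_insert_of_notMem hy_not]
          exact Finset.card_le_card hsub
        omega

/-- L3: one step of the multiscale construction. -/
theorem exists_step (D : ℝ) (hD : 0 < D) (A : ℕ) (Y : Finset α) :
    ∃ (G : Fin A → Finset α) (Y' : Finset α),
      (∀ t, G t ⊆ Y ∧ SepSet D (G t)) ∧ Y' ⊆ Y ∧
      A * Y'.card ≤ Y.card ∧
      (∀ y ∈ Y, (∃ t, y ∈ G t) ∨ ∃ y' ∈ Y', dist y y' < 2 * D) := by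
  classical
  obtain ⟨G, r, hG, hrY, hcov, hrich⟩ := exists_peeling D hD A Y
  obtain ⟨Y', hY'r, hY'sep, hY'max⟩ := exists_maximal_separated r (2 * D) (by linarith)
  refine ⟨G, Y', hG, hY'r.trans hrY, ?_, ?_⟩
  · -- counting
    have hdisj : ∀ y₁ ∈ Y', ∀ y₂ ∈ Y', y₁ ≠ y₂ →
        Disjoint (Y.filter fun z => dist y₁ z < D) (Y.filter fun z => dist y₂ z < D) := by
      intro y₁ h₁ y₂ h₂ hne
      rw [Finset.disjoint_left]
      intro z hz₁ hz₂
      have d₁ := (Finset.mem_filter.1 hz₁).2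
      have d₂ := (Finset.mem_filter.1 hz₂).2
      have := hY'sep y₁ h₁ y₂ h₂ hne
      have : dist y₁ y₂ ≤ dist y₁ z + dist z y₂ := dist_triangle _ _ _
      rw [dist_comm z y₂] at this
      linarith [hY'sep y₁ h₁ y₂ h₂ hne]
    calc A * Y'.card = ∑ _y ∈ Y', A := by rw [Finset.sum_const, smul_eq_mul, mul_comm]
      _ ≤ ∑ y ∈ Y', (Y.filter fun z => dist y z < D).card := by
          exact Finset.sum_le_sum fun y hy => hrich y (hY'r hy)
      _ = (Y'.biUnion fun y => Y.filter fun z => dist y z < D).card := by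
          rw [Finset.card_biUnion hdisj]
      _ ≤ Y.card := Finset.card_le_card (by
          intro z hz
          obtain ⟨y, _, hzy⟩ := Finset.mem_biUnion.1 hz
          exact (Finset.mem_filter.1 hzy).1)
  · intro y hy
    rcases hcov y hy with h | hyr
    · exact Or.inl h
    · obtain ⟨y', hy', hd⟩ := hY'max y hyr
      exact Or.inr ⟨y', hy', hd⟩

/-- radius recursion -/
noncomputable def rhoSeq (m : ℕ) (γ : ℝ) : ℕ → ℝ
  | 0 => 0
  | k+1 => rhoSeq m γ k + 2 * ((m : ℝ) * (rhoSeq m γ k + 2)) ^ γ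

theorem rhoSeq_nonneg (m : ℕ) (γ : ℝ) (k : ℕ) : 0 ≤ rhoSeq m γ k := by
  induction k with
  | zero => simp [rhoSeq]
  | succ k ih =>
      have h2 : (0:ℝ) ≤ ((m : ℝ) * (rhoSeq m γ k + 2)) ^ γ :=
        Real.rpow_nonneg (by positivity) _
      simp only [rhoSeq]
      linarith

theorem rhoSeq_D_pos (m : ℕ) (hm : 0 < m) (γ : ℝ) (k : ℕ) :
    0 < ((m : ℝ) * (rhoSeq m γ k + 2)) ^ γ := by
  have := rhoSeq_nonneg m γ k
  have hm1 : (1:ℝ) ≤ (m:ℝ) := by exact_mod_cast hm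
  have hb : (0:ℝ) < (m : ℝ) * (rhoSeq m γ k + 2) := by nlinarith
  exact Real.rpow_pos_of_pos hb _

/-- Growth bound: `ρ k + 2 ≤ (3m)^(5 γ^k - 3)`. -/
theorem rhoSeq_bound (m : ℕ) (hm : 0 < m) (γ : ℝ) (hγ : 2 ≤ γ) (k : ℕ) :
    rhoSeq m γ k + 2 ≤ ((3:ℝ) * m) ^ (5 * γ ^ k - 3) := by
  have hm1 : (1:ℝ) ≤ (m:ℝ) := by exact_mod_cast hm
  have hX : (3:ℝ) ≤ 3 * m := by linarith
  have hX1 : (1:ℝ) ≤ 3 * m := by linarith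
  have hX0 : (0:ℝ) < 3 * m := by linarith
  have hγ0 : (0:ℝ) ≤ γ := by linarith
  have hγ1 : (1:ℝ) ≤ γ := by linarith
  induction k with
  | zero =>
      simp only [rhoSeq, pow_zero, mul_one, zero_add]
      rw [show (5:ℝ) - 3 = ((2:ℕ):ℝ) by norm_num, Real.rpow_natCast]
      nlinarith
  | succ k ih =>
      have hγk : (1:ℝ) ≤ γ ^ k := one_le_pow₀ hγ1
      have hρ := rhoSeq_nonneg m γ k
      set R := rhoSeq m γ k + 2 with hRdef
      have hR2 : (2:ℝ) ≤ R := by rw [hRdef]; linarith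
      have hR0 : (0:ℝ) ≤ R := by linarith
      have hstep : rhoSeq m γ (k+1) + 2 = R + 2 * ((m:ℝ) * R) ^ γ := by
        simp only [rhoSeq, hRdef]; ring
      have hRD : R ≤ ((m:ℝ) * R) ^ γ := by
        have h1 : R ^ (2:ℝ) ≤ R ^ γ :=
          Real.rpow_le_rpow_of_exponent_le (by linarith) hγ
        have h2 : R ^ γ ≤ ((m:ℝ) * R) ^ γ :=
          Real.rpow_le_rpow hR0 (by nlinarith) hγ0
        have h3 : R ≤ R ^ (2:ℝ) := by
          rw [show (2:ℝ) = ((2:ℕ):ℝ) by norm_num, Real.rpow_natCast]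
          nlinarith
        linarith
      have hmR : (m:ℝ) * R ≤ (3 * m) ^ (1 + (5 * γ ^ k - 3)) := by
        rw [Real.rpow_add hX0, Real.rpow_one]
        exact mul_le_mul (by linarith) ih hR0 (by linarith)
      have hDb : ((m:ℝ) * R) ^ γ ≤ (3 * m) ^ ((1 + (5 * γ ^ k - 3)) * γ) := by
        rw [Real.rpow_mul (le_of_lt hX0)]
        exact Real.rpow_le_rpow (by positivity) hmR hγ0
      have hD0 : (0:ℝ) ≤ ((m:ℝ) * R) ^ γ := Real.rpow_nonneg (by positivity) _
      calc rhoSeq m γ (k+1) + 2 = R + 2 * ((m:ℝ) * R) ^ γ := hstep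
        _ ≤ 3 * ((m:ℝ) * R) ^ γ := by linarith
        _ ≤ (3 * m) * ((3 * m) ^ ((1 + (5 * γ ^ k - 3)) * γ)) := by
            apply mul_le_mul hX hDb hD0 (by linarith)
        _ = (3 * m) ^ (1 + (1 + (5 * γ ^ k - 3)) * γ) := by
            rw [Real.rpow_add hX0, Real.rpow_one]
        _ ≤ (3 * m) ^ (5 * γ ^ (k+1) - 3) := by
            apply Real.rpow_le_rpow_of_exponent_le hX1
            have : γ ^ (k+1) = γ ^ k * γ := pow_succ γ k
            nlinarith

end Aux

section Aux2
variable {α : Type*} [MetricSpace α]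
theorem multiscale (γ : ℝ) (Z : Finset α) (hZ : Z.Nonempty) (A K : ℕ)
    (hAK : Z.card < A ^ K) :
    ∃ G : ℕ → Fin A → Finset α,
      (∀ k t, (G k t).card ≤ Z.card ∧
        SepSet (((Z.card : ℝ) * (rhoSeq Z.card γ k + 2)) ^ γ) (G k t)) ∧
      ∀ z ∈ Z, ∃ k < K, ∃ t, ∃ g ∈ G k t, dist z g ≤ rhoSeq Z.card γ k := by
  classical
  set m := Z.card with hmdef
  have hm : 0 < m := Finset.card_pos.2 hZ
  set D : ℕ → ℝ := fun k => ((m : ℝ) * (rhoSeq m γ k + 2)) ^ γ with hDdef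
  have hD : ∀ k, 0 < D k := fun k => rhoSeq_D_pos m hm γ k
  have hex : ∀ (k : ℕ) (Y : Finset α), ∃ (G : Fin A → Finset α) (Y' : Finset α),
      (∀ t, G t ⊆ Y ∧ SepSet (D k) (G t)) ∧ Y' ⊆ Y ∧ A * Y'.card ≤ Y.card ∧
      (∀ y ∈ Y, (∃ t, y ∈ G t) ∨ ∃ y' ∈ Y', dist y y' < 2 * D k) :=
    fun k Y => exists_step (D k) (hD k) A Y
  choose Gf Yf h1 h2 h3 h4 using hex
  set Ys : ℕ → Finset α := fun k => Nat.rec (motive := fun _ => Finset α) Z (fun k ih => Yf k ih) k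
    with hYsdef
  have hYs0 : Ys 0 = Z := rfl
  have hYsS : ∀ k, Ys (k+1) = Yf k (Ys k) := fun k => rfl
  set G : ℕ → Fin A → Finset α := fun k => Gf k (Ys k) with hGdef
  have hsub : ∀ k, Ys k ⊆ Z := by
    intro k
    induction k with
    | zero => exact subset_rfl
    | succ k ih => rw [hYsS k]; exact (h2 k (Ys k)).trans ih
  have hcard : ∀ k, A ^ k * (Ys k).card ≤ m := by
    intro k
    induction k with
    | zero => simp [hYs0, hmdef]
    | succ k ih =>
        calc A ^ (k+1) * (Ys (k+1)).card = A ^ k * (A * (Ys (k+1)).card) := by ring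
          _ ≤ A ^ k * (Ys k).card := by
              apply Nat.mul_le_mul_left
              rw [hYsS k]
              exact h3 k (Ys k)
          _ ≤ m := ih
  have hcov : ∀ k, ∀ z ∈ Z,
      (∃ k' < k, ∃ t, ∃ g ∈ G k' t, dist z g ≤ rhoSeq m γ k') ∨
      (∃ y ∈ Ys k, dist z y ≤ rhoSeq m γ k) := by
    intro k
    induction k with
    | zero =>
        intro z hz
        exact Or.inr ⟨z, hz, by simp [rhoSeq]⟩
    | succ k ih =>
        intro z hz
        rcases ih z hz with ⟨k', hk', ht⟩ | ⟨y, hy, hd⟩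
        · exact Or.inl ⟨k', Nat.lt_succ_of_lt hk', ht⟩
        · rcases h4 k (Ys k) y hy with ⟨t, hyt⟩ | ⟨y', hy', hdy⟩
          · exact Or.inl ⟨k, Nat.lt_succ_self k, t, y, hyt, hd⟩
          · refine Or.inr ⟨y', by rw [hYsS k]; exact hy', ?_⟩
            calc dist z y' ≤ dist z y + dist y y' := dist_triangle _ _ _
              _ ≤ rhoSeq m γ k + 2 * D k := by linarith
              _ = rhoSeq m γ (k+1) := by simp [rhoSeq, hDdef]
  have hYK : Ys K = ∅ := by
    by_contra hne
    have hpos : 0 < (Ys K).card := Finset.card_pos.2 (Finset.nonempty_iff_ne_empty.2 hne)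
    have : A ^ K ≤ A ^ K * (Ys K).card := Nat.le_mul_of_pos_right _ hpos
    have := (this.trans (hcard K))
    omega
  refine ⟨G, fun k t => ⟨?_, (h1 k (Ys k) t).2⟩, ?_⟩
  · exact Finset.card_le_card (((h1 k (Ys k) t).1).trans (hsub k))
  · intro z hz
    rcases hcov K z hz with ⟨k', hk', ht⟩ | ⟨y, hy, _⟩
    · exact ⟨k', hk', ht⟩
    · rw [hYK] at hy
      exact absurd hy (Finset.notMem_empty y)

end Aux2

section Aux3
variable {d : ℕ}

theorem cube_eq_preimage (p : EuclideanSpace ℝ (Fin d)) (c : ℝ) :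
    cube p c = (MeasurableEquiv.toLp 2 (Fin d → ℝ)).symm ⁻¹'
      (Set.univ.pi fun i => Set.Icc (p i - c / 2) (p i + c / 2)) := by
  ext x
  simp only [cube, Set.mem_setOf_eq, Set.mem_preimage, Set.mem_pi, Set.mem_univ, true_implies,
    Set.mem_Icc, MeasurableEquiv.coe_toLp_symm]
  constructor
  · intro h i
    have := abs_le.1 (h i)
    constructor <;> linarith [this.1, this.2]
  · intro h i
    rw [abs_le]
    constructor <;> linarith [(h i).1, (h i).2]

theorem volume_cube (p : EuclideanSpace ℝ (Fin d)) (c : ℝ) :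
    volume (cube p c) = (ENNReal.ofReal c) ^ d := by
  rw [cube_eq_preimage,
    (EuclideanSpace.volume_preserving_symm_measurableEquiv_toLp (Fin d)).measure_preimage
      ((MeasurableSet.univ_pi fun i => measurableSet_Icc).nullMeasurableSet),
    volume_pi_pi]
  have : ∀ i : Fin d, volume (Set.Icc (p i - c / 2) (p i + c / 2)) = ENNReal.ofReal c := by
    intro i
    rw [Real.volume_Icc]
    congr 1
    ring
  rw [Finset.prod_congr rfl fun i _ => this i, Finset.prod_const]
  simp

theorem measurableSet_cube (p : EuclideanSpace ℝ (Fin d)) (c : ℝ) :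
    MeasurableSet (cube p c) := by
  rw [cube_eq_preimage]
  exact (MeasurableEquiv.toLp 2 (Fin d → ℝ)).symm.measurable
    (MeasurableSet.univ_pi fun i => measurableSet_Icc)

/-- grid points attached to a cube center -/
noncomputable def gridPts (p : EuclideanSpace ℝ (Fin d)) : Finset (EuclideanSpace ℝ (Fin d)) :=
  (Fintype.piFinset fun _ : Fin d => Finset.Icc (-(d + 1 : ℤ)) (d + 1)).image
    (fun v => (WithLp.toLp 2 (fun i => p i + (v i : ℝ) / (d + 1)) : EuclideanSpace ℝ (Fin d)))

theorem gridPts_card (p : EuclideanSpace ℝ (Fin d)) : (gridPts p).card ≤ (2 * d + 3) ^ d := by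
  refine Finset.card_image_le.trans (le_of_eq ?_)
  have hIcc : (Finset.Icc (-(d + 1 : ℤ)) (d + 1)).card = 2 * d + 3 := by
    rw [Int.card_Icc]
    omega
  calc (Fintype.piFinset fun _ : Fin d => Finset.Icc (-(d + 1 : ℤ)) (d + 1)).card
      = ∏ _i : Fin d, (2 * d + 3) := by
        rw [Fintype.card_piFinset]
        exact Finset.prod_congr rfl fun i _ => hIcc
    _ = (2 * d + 3) ^ d := by rw [Finset.prod_const, Finset.card_univ, Fintype.card_fin]

theorem gridPts_nonempty (p : EuclideanSpace ℝ (Fin d)) : (gridPts p).Nonempty := by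
  refine ⟨_, Finset.mem_image_of_mem _ (a := fun _ : Fin d => (0 : ℤ)) ?_⟩
  rw [Fintype.mem_piFinset]
  intro i
  rw [Finset.mem_Icc]
  omega

theorem gridPts_cover (p : EuclideanSpace ℝ (Fin d)) (c : ℝ) (hc : c ≤ 2)
    (x : EuclideanSpace ℝ (Fin d)) (hx : x ∈ cube p c) :
    ∃ z ∈ gridPts p, dist x z ≤ 1 / 2 := by
  classical
  set v : Fin d → ℤ := fun i => round ((x i - p i) * (d + 1)) with hv
  have hd1 : (0:ℝ) < (d:ℝ) + 1 := by positivity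
  have hmem : v ∈ Fintype.piFinset fun _ : Fin d => Finset.Icc (-(d + 1 : ℤ)) (d + 1) := by
    rw [Fintype.mem_piFinset]
    intro i
    rw [Finset.mem_Icc]
    have hxi : |x i - p i| ≤ 1 := le_trans (hx i) (by linarith)
    have habs : |(x i - p i) * (d + 1)| ≤ (d : ℝ) + 1 := by
      rw [abs_mul, abs_of_pos hd1]
      nlinarith [abs_nonneg (x i - p i)]
    have h1 : |(x i - p i) * (d + 1) - (v i : ℝ)| ≤ 1 / 2 := by
      rw [hv]
      exact abs_sub_round _
    have hb := abs_le.1 habs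
    have hb1 := abs_le.1 h1
    constructor
    · have h5 : (-((d:ℤ) + 1) : ℝ) < (v i : ℝ) + 1 := by push_cast; linarith [hb.1, hb1.2]
      exact_mod_cast Int.lt_add_one_iff.mp (by exact_mod_cast h5)
    · have h5 : (v i : ℝ) < (((d:ℤ) + 1) : ℝ) + 1 := by push_cast; linarith [hb.2, hb1.1]
      exact_mod_cast Int.lt_add_one_iff.mp (by exact_mod_cast h5)
  refine ⟨_, Finset.mem_image_of_mem _ hmem, ?_⟩
  rw [EuclideanSpace.dist_eq]
  have hbound : ∀ i : Fin d,
      dist (x i) ((fun j => p j + (v j : ℝ) / (d + 1)) i) ^ 2 ≤ 1 / (4 * ((d:ℝ) + 1) ^ 2) := by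
    intro i
    have h1 : |(x i - p i) * (d + 1) - (v i : ℝ)| ≤ 1 / 2 := abs_sub_round _
    have hdist : dist (x i) (p i + (v i : ℝ) / (d + 1)) =
        |(x i - p i) * (d + 1) - (v i : ℝ)| / ((d:ℝ) + 1) := by
      have heq : x i - (p i + (v i : ℝ) / (d + 1)) =
          ((x i - p i) * (d + 1) - (v i : ℝ)) / ((d:ℝ) + 1) := by
        field_simp
        ring
      rw [Real.dist_eq, heq, abs_div, abs_of_pos hd1]
    have h2 : dist (x i) (p i + (v i : ℝ) / (d + 1)) ≤ (1 / 2) / ((d:ℝ) + 1) := by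
      rw [hdist]
      gcongr
    have h0 : (0:ℝ) ≤ dist (x i) (p i + (v i : ℝ) / (d + 1)) := dist_nonneg
    calc dist (x i) ((fun j => p j + (v j : ℝ) / (d + 1)) i) ^ 2
        ≤ ((1 / 2) / ((d:ℝ) + 1)) ^ 2 := by
          apply pow_le_pow_left₀ h0 h2
      _ = 1 / (4 * ((d:ℝ) + 1) ^ 2) := by field_simp; ring
  have hsum : (∑ i : Fin d, dist (x i) ((fun j => p j + (v j : ℝ) / (d + 1)) i) ^ 2)
      ≤ (1:ℝ) / 4 := by
    calc (∑ i : Fin d, dist (x i) ((fun j => p j + (v j : ℝ) / (d + 1)) i) ^ 2)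
        ≤ ∑ _i : Fin d, 1 / (4 * ((d:ℝ) + 1) ^ 2) :=
          Finset.sum_le_sum fun i _ => hbound i
      _ = (d : ℝ) * (1 / (4 * ((d:ℝ) + 1) ^ 2)) := by
          rw [Finset.sum_const, Finset.card_univ, Fintype.card_fin, nsmul_eq_mul]
      _ ≤ 1 / 4 := by
          rw [mul_one_div, div_le_div_iff₀ (by positivity) (by norm_num)]
          nlinarith [Nat.cast_nonneg (α := ℝ) d]
  calc Real.sqrt (∑ i : Fin d, dist (x i) ((fun j => p j + (v j : ℝ) / (d + 1)) i) ^ 2)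
      ≤ Real.sqrt (1 / 4) := Real.sqrt_le_sqrt hsum
    _ = 1 / 2 := by
        rw [show (1:ℝ)/4 = (1/2)^2 by norm_num, Real.sqrt_sq (by norm_num)]

theorem overlap_bound (E : Set (EuclideanSpace ℝ (Fin d))) (hEm : MeasurableSet E) (c : ℝ)
    (M : ℕ) (P : Finset (EuclideanSpace ℝ (Fin d)))
    (hE : E = ⋃ p ∈ P, cube p c)
    (hover : ∀ x, (P.filter fun p => x ∈ cube p c).card ≤ M) :
    (P.card : ℝ≥0∞) * ENNReal.ofReal c ^ d ≤ (M : ℝ≥0∞) * volume E := by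
  classical
  have key : ∀ x, (∑ p ∈ P, (cube p c).indicator (1 : EuclideanSpace ℝ (Fin d) → ℝ≥0∞) x) ≤
      (M : ℝ≥0∞) * E.indicator (1 : EuclideanSpace ℝ (Fin d) → ℝ≥0∞) x := by
    intro x
    by_cases hx : x ∈ E
    · have hsum : (∑ p ∈ P, (cube p c).indicator (1 : EuclideanSpace ℝ (Fin d) → ℝ≥0∞) x) =
          ((P.filter fun p => x ∈ cube p c).card : ℝ≥0∞) := by
        simp only [Set.indicator_apply, Pi.one_apply]
        rw [Finset.sum_boole]
      rw [hsum, Set.indicator_of_mem hx, Pi.one_apply, mul_one]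
      exact_mod_cast Nat.cast_le.2 (hover x)
    · have hz : ∀ p ∈ P, (cube p c).indicator (1 : EuclideanSpace ℝ (Fin d) → ℝ≥0∞) x = 0 := fun p hp =>
        Set.indicator_of_notMem (fun hxc => hx (hE ▸ Set.mem_biUnion hp hxc)) _
      rw [Finset.sum_congr rfl hz]
      simp
  calc (P.card : ℝ≥0∞) * ENNReal.ofReal c ^ d
      = ∑ _p ∈ P, ENNReal.ofReal c ^ d := by rw [Finset.sum_const, nsmul_eq_mul]
    _ = ∑ p ∈ P, volume (cube p c) := Finset.sum_congr rfl fun p _ => (volume_cube p c).symm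
    _ = ∑ p ∈ P, ∫⁻ x, (cube p c).indicator (1 : EuclideanSpace ℝ (Fin d) → ℝ≥0∞) x := Finset.sum_congr rfl fun p _ =>
        (lintegral_indicator_one (measurableSet_cube p c)).symm
    _ = ∫⁻ x, ∑ p ∈ P, (cube p c).indicator (1 : EuclideanSpace ℝ (Fin d) → ℝ≥0∞) x :=
        (lintegral_finset_sum _ fun p _ => measurable_const.indicator (measurableSet_cube p c)).symm
    _ ≤ ∫⁻ x, (M : ℝ≥0∞) * E.indicator (1 : EuclideanSpace ℝ (Fin d) → ℝ≥0∞) x := lintegral_mono key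
    _ = (M : ℝ≥0∞) * ∫⁻ x, E.indicator (1 : EuclideanSpace ℝ (Fin d) → ℝ≥0∞) x :=
        lintegral_const_mul _ (measurable_one.indicator hEm)
    _ = (M : ℝ≥0∞) * volume E := by rw [lintegral_indicator_one hEm]

theorem volume_E_lt_top (E : Set (EuclideanSpace ℝ (Fin d))) (c : ℝ)
    (P : Finset (EuclideanSpace ℝ (Fin d))) (hE : E = ⋃ p ∈ P, cube p c) :
    volume E < ⊤ := by
  calc volume E ≤ ∑ p ∈ P, volume (cube p c) := hE ▸ measure_biUnion_finset_le P _
    _ = ∑ _p ∈ P, ENNReal.ofReal c ^ d := Finset.sum_congr rfl fun p _ => volume_cube p c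
    _ < ⊤ := by
        rw [Finset.sum_const, nsmul_eq_mul]
        exact ENNReal.mul_lt_top (by simp) (ENNReal.pow_lt_top ENNReal.ofReal_lt_top)

end Aux3

set_option maxHeartbeats 1600000 in
/-- **Lemma 2.5 (Tao's decomposition lemma, precise version)**: let `γ ≥ 2` be fixed. There is a
constant `C` (independent of `E` and `K`) such that: for every set `E` with `|E| > 1` which is a
finite union of finitely overlapping cubes of side-length `c ∼ 1`, and every `K ∈ ℕ`, `K > 0`,
there are subsets `E_1, …, E_K` of `E` with `E = ∪_k E_k` such that each `E_k` is covered by the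
union of `O(|E|^{1/K})` many `(O(|E|), |E|^{O(γ^{k-1})})`-sparse collections of balls. -/
theorem decomposition_into_sparse_collections (d : ℕ) (γ : ℝ) (hγ : 2 ≤ γ) (M : ℕ) :
    ∃ C : ℝ, 0 < C ∧
      ∀ E : Set (EuclideanSpace ℝ (Fin d)), MeasurableSet E → 1 < volume E →
      ∀ c : ℝ, 1 / 2 ≤ c → c ≤ 2 →
      ∀ P : Finset (EuclideanSpace ℝ (Fin d)),
        (E = ⋃ p ∈ P, cube p c) →
        (∀ x : EuclideanSpace ℝ (Fin d), (P.filter fun p => x ∈ cube p c).card ≤ M) →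
      ∀ K : ℕ, 0 < K →
      ∃ Ek : Fin K → Set (EuclideanSpace ℝ (Fin d)),
        (E = ⋃ k, Ek k) ∧ (∀ k, Ek k ⊆ E) ∧
        ∀ k : Fin K, ∃ (J : ℕ) (Ns : Fin J → ℕ) (Rs : Fin J → ℝ)
            (ctr : (j : Fin J) → Fin (Ns j) → EuclideanSpace ℝ (Fin d)),
          (J : ℝ) ≤ C * (volume E).toReal ^ ((1 : ℝ) / K) ∧
          (∀ j, (Ns j : ℝ) ≤ C * (volume E).toReal) ∧
          (∀ j, 0 < Rs j ∧ Rs j ≤ (volume E).toReal ^ (C * γ ^ (k : ℕ))) ∧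
          (∀ j, IsSparseFamilyEuc γ (Ns j) (Rs j) (ctr j)) ∧
          Ek k ⊆ ⋃ j, ⋃ i, Metric.ball (ctr j i) (Rs j) := by
  classical
  have hγ0 : (0:ℝ) < γ := by linarith
  set B : ℕ := (M + 1) * 2 ^ d * (2 * d + 3) ^ d with hBdef
  have hB0 : 0 < B := by positivity
  have hBR : (1:ℝ) ≤ (B:ℝ) := by exact_mod_cast hB0
  set c₀ : ℝ := Real.logb 2 (3 * B) + 1 with hc₀def
  have hc₀1 : 1 ≤ c₀ := by
    have : 0 ≤ Real.logb 2 (3 * B) := Real.logb_nonneg (by norm_num) (by linarith)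
    rw [hc₀def]; linarith
  refine ⟨5 * c₀ + 4 * B + 1, by linarith, ?_⟩
  set C : ℝ := 5 * c₀ + 4 * B + 1 with hCdef
  have hC1 : 1 ≤ C := by rw [hCdef]; linarith
  intro E hEm hEvol c hc1 hc2 P hE hover K hK
  have hKR : (0:ℝ) < K := by exact_mod_cast hK
  have hEfin : volume E < ⊤ := volume_E_lt_top E c P hE
  set V : ℝ := (volume E).toReal with hVdef
  have hV1 : 1 < V := by
    rw [hVdef, ← ENNReal.toReal_one]
    exact (ENNReal.toReal_lt_toReal (by simp) hEfin.ne).2 hEvol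
  have hV0 : (0:ℝ) < V := by linarith
  have hVK1 : (1:ℝ) ≤ V ^ ((1:ℝ)/K) := Real.one_le_rpow hV1.le (by positivity)
  -- bound on the number of cubes
  have hPV : (P.card : ℝ) ≤ (M : ℝ) * 2 ^ d * V := by
    have h := overlap_bound E hEm c M P hE hover
    have hlow : (P.card : ℝ≥0∞) * ENNReal.ofReal (1/2) ^ d ≤ (M : ℝ≥0∞) * volume E := by
      refine le_trans ?_ h
      have hoo : ENNReal.ofReal (1/2) ≤ ENNReal.ofReal c := ENNReal.ofReal_le_ofReal hc1
      gcongr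
    have hRHSne : (M : ℝ≥0∞) * volume E ≠ ⊤ := ENNReal.mul_ne_top (by simp) hEfin.ne
    have hLHSne : (P.card : ℝ≥0∞) * ENNReal.ofReal (1/2) ^ d ≠ ⊤ :=
      ENNReal.mul_ne_top (by simp) (by simp [ENNReal.pow_ne_top, ENNReal.ofReal_ne_top])
    have h2 := (ENNReal.toReal_le_toReal hLHSne hRHSne).2 hlow
    rw [ENNReal.toReal_mul, ENNReal.toReal_mul, ENNReal.toReal_pow, ENNReal.toReal_ofReal
      (by norm_num), ENNReal.toReal_natCast, ENNReal.toReal_natCast] at h2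
    have hhalf : ((1:ℝ)/2) ^ d * 2 ^ d = 1 := by
      rw [← mul_pow]; norm_num
    calc (P.card : ℝ) = (P.card * ((1/2)^d * 2^d)) := by rw [hhalf, mul_one]
      _ = (P.card * (1/2)^d) * 2^d := by ring
      _ ≤ ((M:ℝ) * V) * 2^d := by
          apply mul_le_mul_of_nonneg_right _ (by positivity)
          exact_mod_cast h2
      _ = (M:ℝ) * 2^d * V := by ring
  -- the grid
  set Z : Finset (EuclideanSpace ℝ (Fin d)) := P.biUnion (fun p => gridPts p) with hZdef
  have hZcov : ∀ x ∈ E, ∃ z ∈ Z, dist x z ≤ 1/2 := by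
    intro x hx
    rw [hE] at hx
    simp only [Set.mem_iUnion] at hx
    obtain ⟨p, hp, hxp⟩ := hx
    obtain ⟨z, hz, hdz⟩ := gridPts_cover p c hc2 x hxp
    exact ⟨z, Finset.mem_biUnion.2 ⟨p, hp, hz⟩, hdz⟩
  have hEne : E.Nonempty := by
    apply MeasureTheory.nonempty_of_measure_ne_zero (μ := volume)
    intro h
    rw [h] at hEvol
    exact absurd hEvol (by simp)
  have hZne : Z.Nonempty := by
    obtain ⟨x, hx⟩ := hEne
    obtain ⟨z, hz, _⟩ := hZcov x hx
    exact ⟨z, hz⟩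
  set m : ℕ := Z.card with hmdef
  have hm1 : 1 ≤ m := Finset.card_pos.2 hZne
  have hmR1 : (1:ℝ) ≤ (m:ℝ) := by exact_mod_cast hm1
  have hmV : (m : ℝ) ≤ (B:ℝ) * V := by
    have h1 : m ≤ P.card * (2*d+3)^d := by
      refine le_trans Finset.card_biUnion_le ?_
      calc ∑ p ∈ P, (gridPts p).card ≤ ∑ _p ∈ P, (2*d+3)^d :=
            Finset.sum_le_sum fun p _ => gridPts_card p
        _ = P.card * (2*d+3)^d := by rw [Finset.sum_const, smul_eq_mul]
    have h2d : (0:ℝ) ≤ 2^d := by positivity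
    have h3d : (0:ℝ) ≤ ((2*d+3:ℕ):ℝ)^d := by positivity
    have h3d' : (0:ℝ) ≤ (2*(d:ℝ)+3)^d := by positivity
    calc (m:ℝ) ≤ (P.card : ℝ) * ((2*d+3:ℕ):ℝ)^d := by exact_mod_cast h1
      _ ≤ ((M:ℝ) * 2^d * V) * ((2*d+3:ℕ):ℝ)^d :=
          mul_le_mul_of_nonneg_right hPV h3d
      _ ≤ (B:ℝ) * V := by
          rw [hBdef]
          push_cast
          nlinarith [mul_nonneg (mul_nonneg h2d h3d') hV0.le, Nat.cast_nonneg (α := ℝ) M]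
  by_cases hVbig : 2 ≤ V
  · -- main case: the multiscale construction
    set A : ℕ := ⌈((m:ℝ)+1) ^ ((1:ℝ)/K)⌉₊ with hAdef
    have hval1 : (1:ℝ) ≤ ((m:ℝ)+1)^((1:ℝ)/K) := Real.one_le_rpow (by linarith) (by positivity)
    have hA1R : ((m:ℝ)+1)^((1:ℝ)/K) ≤ (A:ℝ) := Nat.le_ceil _
    have hAup : (A:ℝ) ≤ 2 * ((m:ℝ)+1)^((1:ℝ)/K) := by
      have := Nat.ceil_lt_add_one (le_trans zero_le_one hval1)
      rw [hAdef]
      linarith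
    have hAK : m < A ^ K := by
      have h1 : ((m:ℝ)+1) ≤ (A:ℝ)^K := by
        calc ((m:ℝ)+1) = (((m:ℝ)+1)^((1:ℝ)/K))^(K:ℕ) := by
              rw [← Real.rpow_natCast (((m:ℝ)+1)^((1:ℝ)/K)) K, ← Real.rpow_mul (by linarith),
                one_div, inv_mul_cancel₀ (by exact_mod_cast hK.ne' : (K:ℝ) ≠ 0), Real.rpow_one]
          _ ≤ (A:ℝ)^(K:ℕ) := pow_le_pow_left₀ (by positivity) hA1R K
      have h2 : ((m:ℝ)) < ((A^K : ℕ):ℝ) := by push_cast; linarith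
      exact_mod_cast h2
    obtain ⟨G, hGprop, hGcov⟩ := multiscale γ Z hZne A K hAK
    rw [← hmdef] at hGprop hGcov
    have hρnn : ∀ k, 0 ≤ rhoSeq m γ k := rhoSeq_nonneg m γ
    have hRpos : ∀ k : ℕ, (0:ℝ) < rhoSeq m γ k + 2 := fun k => by linarith [hρnn k]
    have h3m1 : (1:ℝ) ≤ 3 * m := by linarith
    have h3m : (3:ℝ) * m ≤ V ^ c₀ := by
      have h3B0 : (0:ℝ) < 3 * B := by linarith
      have hlog0 : 0 ≤ Real.logb 2 (3 * B) := Real.logb_nonneg (by norm_num) (by linarith)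
      have hpow : (2:ℝ) ^ Real.logb 2 (3*(B:ℝ)) = 3*(B:ℝ) :=
        Real.rpow_logb (by norm_num) (by norm_num) h3B0
      have h2V : (2:ℝ)^(Real.logb 2 (3*(B:ℝ))) ≤ V^(Real.logb 2 (3*(B:ℝ))) :=
        Real.rpow_le_rpow (by norm_num) hVbig hlog0
      calc (3:ℝ)*m ≤ 3*((B:ℝ)*V) := by linarith
        _ = (3*(B:ℝ))*V := by ring
        _ ≤ V^(Real.logb 2 (3*(B:ℝ))) * V := by
            apply mul_le_mul_of_nonneg_right _ hV0.le
            rw [hpow] at h2V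
            exact h2V
        _ = V ^ (Real.logb 2 (3*(B:ℝ)) + 1) := by rw [Real.rpow_add hV0, Real.rpow_one]
        _ = V ^ c₀ := by rw [hc₀def]
    refine ⟨fun k => E ∩ ⋃ t : Fin A, ⋃ g ∈ G (k:ℕ) t, Metric.ball g (rhoSeq m γ (k:ℕ) + 2),
      ?_, fun k => Set.inter_subset_left, ?_⟩
    · apply Set.Subset.antisymm
      · intro x hx
        obtain ⟨z, hz, hdz⟩ := hZcov x hx
        obtain ⟨k', hk', t, g, hg, hdg⟩ := hGcov z hz
        refine Set.mem_iUnion.2 ⟨⟨k', hk'⟩, hx, ?_⟩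
        refine Set.mem_iUnion.2 ⟨t, ?_⟩
        refine Set.mem_iUnion.2 ⟨g, Set.mem_iUnion.2 ⟨hg, ?_⟩⟩
        rw [Metric.mem_ball]
        have htri : dist x g ≤ dist x z + dist z g := dist_triangle _ _ _
        simp only []
        linarith
      · exact Set.iUnion_subset fun k => Set.inter_subset_left
    · intro k
      refine ⟨A, fun t => (G (k:ℕ) t).card, fun _ => rhoSeq m γ (k:ℕ) + 2,
        fun t i => ((G (k:ℕ) t).equivFin.symm i : EuclideanSpace ℝ (Fin d)), ?_, ?_, ?_, ?_, ?_⟩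
      · -- number of families
        have h1 : ((m:ℝ)+1) ≤ 2*(B:ℝ)*V := by nlinarith
        have h2 : ((m:ℝ)+1)^((1:ℝ)/K) ≤ (2*(B:ℝ)*V)^((1:ℝ)/K) :=
          Real.rpow_le_rpow (by positivity) h1 (by positivity)
        have h3 : ((2*(B:ℝ)*V))^((1:ℝ)/K) = (2*(B:ℝ))^((1:ℝ)/K) * V^((1:ℝ)/K) :=
          Real.mul_rpow (by positivity) hV0.le
        have h4 : ((2*(B:ℝ)))^((1:ℝ)/K) ≤ 2*(B:ℝ) := by
          calc ((2*(B:ℝ)))^((1:ℝ)/K) ≤ (2*(B:ℝ))^(1:ℝ) := by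
                apply Real.rpow_le_rpow_of_exponent_le (by linarith)
                rw [div_le_one hKR]
                exact_mod_cast Nat.one_le_cast.2 hK
            _ = 2*(B:ℝ) := Real.rpow_one _
        have hVK0 : (0:ℝ) ≤ V^((1:ℝ)/K) := by positivity
        calc (A:ℝ) ≤ 2 * ((m:ℝ)+1)^((1:ℝ)/K) := hAup
          _ ≤ 2 * ((2*(B:ℝ))^((1:ℝ)/K) * V^((1:ℝ)/K)) := by
              rw [← h3]; linarith
          _ ≤ 2 * ((2*(B:ℝ)) * V^((1:ℝ)/K)) := by
              apply mul_le_mul_of_nonneg_left _ (by norm_num)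
              exact mul_le_mul_of_nonneg_right h4 hVK0
          _ = (4*(B:ℝ)) * V^((1:ℝ)/K) := by ring
          _ ≤ C * V^((1:ℝ)/K) := by
              apply mul_le_mul_of_nonneg_right _ hVK0
              rw [hCdef]; linarith
      · intro j
        have hcard : (G (k:ℕ) j).card ≤ m := (hGprop (k:ℕ) j).1
        calc ((G (k:ℕ) j).card : ℝ) ≤ (m:ℝ) := by exact_mod_cast hcard
          _ ≤ (B:ℝ) * V := hmV
          _ ≤ C * V := by
              apply mul_le_mul_of_nonneg_right _ hV0.le
              rw [hCdef]; linarith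
      · intro j
        refine ⟨hRpos (k:ℕ), ?_⟩
        have hb := rhoSeq_bound m hm1 γ hγ (k:ℕ)
        have hγk1 : (1:ℝ) ≤ γ^(k:ℕ) := one_le_pow₀ (by linarith)
        calc rhoSeq m γ (k:ℕ) + 2 ≤ (3*(m:ℝ))^(5*γ^(k:ℕ)-3) := hb
          _ ≤ (3*(m:ℝ))^(5*γ^(k:ℕ)) :=
              Real.rpow_le_rpow_of_exponent_le h3m1 (by linarith)
          _ ≤ (V^c₀)^(5*γ^(k:ℕ)) :=
              Real.rpow_le_rpow (by positivity) h3m (by positivity)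
          _ = V^(c₀*(5*γ^(k:ℕ))) := by rw [← Real.rpow_mul hV0.le]
          _ ≤ V^(C*γ^(k:ℕ)) := by
              apply Real.rpow_le_rpow_of_exponent_le hV1.le
              rw [hCdef]
              nlinarith
      · intro j i i' hii'
        have hne : ((G (k:ℕ) j).equivFin.symm i : EuclideanSpace ℝ (Fin d)) ≠
            ((G (k:ℕ) j).equivFin.symm i' : EuclideanSpace ℝ (Fin d)) := by
          intro h
          exact hii' ((G (k:ℕ) j).equivFin.symm.injective (Subtype.ext h))
        have hsep := (hGprop (k:ℕ) j).2 _ (Finset.coe_mem ((G (k:ℕ) j).equivFin.symm i)) _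
          (Finset.coe_mem ((G (k:ℕ) j).equivFin.symm i')) hne
        refine le_trans ?_ hsep
        apply Real.rpow_le_rpow (mul_nonneg (Nat.cast_nonneg _) (hRpos (k:ℕ)).le) ?_ (by linarith)
        apply mul_le_mul_of_nonneg_right ?_ (hRpos (k:ℕ)).le
        exact_mod_cast (hGprop (k:ℕ) j).1
      · intro x hx
        obtain ⟨hxE, hxU⟩ := hx
        simp only [Set.mem_iUnion] at hxU
        obtain ⟨t, g, hg, hball⟩ := hxU
        refine Set.mem_iUnion.2 ⟨t, Set.mem_iUnion.2 ⟨(G (k:ℕ) t).equivFin ⟨g, hg⟩, ?_⟩⟩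
        simpa [Equiv.symm_apply_apply] using hball
  · -- small case
    push_neg at hVbig
    haveI : Nonempty (Fin K) := ⟨⟨0, hK⟩⟩
    refine ⟨fun _ => E, (Set.iUnion_const E).symm, fun _ => subset_rfl, ?_⟩
    intro k
    refine ⟨m, fun _ => 1, fun _ => 1, fun j _ => (Z.equivFin.symm j : EuclideanSpace ℝ (Fin d)),
      ?_, ?_, ?_, ?_, ?_⟩
    · calc (m:ℝ) ≤ (B:ℝ) * V := hmV
        _ ≤ 2 * (B:ℝ) := by nlinarith
        _ ≤ C := by rw [hCdef]; linarith
        _ = C * 1 := (mul_one C).symm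
        _ ≤ C * V^((1:ℝ)/K) := mul_le_mul_of_nonneg_left hVK1 (by linarith)
    · intro j
      simp only [Nat.cast_one]
      nlinarith
    · intro j
      refine ⟨one_pos, Real.one_le_rpow hV1.le ?_⟩
      have : (0:ℝ) < γ^(k:ℕ) := by positivity
      nlinarith
    · intro j i i' hii'
      exact absurd (Subsingleton.elim i i') hii'
    · intro x hx
      obtain ⟨z, hz, hdz⟩ := hZcov x hx
      refine Set.mem_iUnion.2 ⟨Z.equivFin ⟨z, hz⟩, Set.mem_iUnion.2 ⟨0, ?_⟩⟩
      simp only [Metric.mem_ball, Equiv.symm_apply_apply]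
      have : dist x z < 1 := by linarith
      exact this
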